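/- Let Y be a random variable with E[e^{(2+α)Y}] < ∞ for some α > 0, ψ(z) = E[e^{izY}] its characteristic function extended to the strip where defined, and c(k) = e^{αk}·E[((e^Y − e^k)⁺)²]. Then the Fourier transform of c satisfies ∫_ℝ e^{ivk} c(k) dk = ψ(v − (α+2)i) · ( 1/(α+iv) − 2/(α+1+iv) + 1/(α+2+iv) ) for all v ∈ ℝ. -/

import Mathlib

open MeasureTheory ProbabilityTheory Real Complex

private lemma integral_coe {X : Type*} [MeasurableSpace X] (μ : Measure X) (g : X → ℝ) :
    ((∫ x, g x ∂μ : ℝ) : ℂ) = ∫ x, ((g x : ℝ) : ℂ) ∂μ := integral_ofReal.symm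

private lemma exp_mul_integrableOn_Iic {b : ℝ} (hb : 0 < b) (y : ℝ) :
    IntegrableOn (fun k : ℝ => Real.exp (b * k)) (Set.Iic y) := by
  refine integrableOn_Iic_of_intervalIntegral_norm_bounded (Real.exp (b * y) / b) y
    (fun t => ?_) Filter.tendsto_id (Filter.Eventually.of_forall fun t => ?_)
  · exact (Real.continuous_exp.comp (continuous_const.mul continuous_id)).integrableOn_Ioc
  · simp_rw [Real.norm_of_nonneg (Real.exp_pos _).le, id]
    have h1 : (∫ x in (t : ℝ)..y, Real.exp (b * x))
        = b⁻¹ • ∫ x in b * t..b * y, Real.exp x :=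
      intervalIntegral.integral_comp_mul_left Real.exp hb.ne'
    rw [h1, integral_exp, smul_eq_mul]
    rw [div_eq_inv_mul]
    have : Real.exp (b * y) - Real.exp (b * t) ≤ Real.exp (b * y) := by
      have := (Real.exp_pos (b * t)).le; linarith
    exact mul_le_mul_of_nonneg_left this (inv_pos.2 hb).le

private lemma cexp_integrableOn_Iic {β : ℂ} (hβ : 0 < β.re) (y : ℝ) :
    IntegrableOn (fun k : ℝ => Complex.exp (β * k)) (Set.Iic y) := by
  refine (exp_mul_integrableOn_Iic hβ y).mono'
    ((Complex.continuous_exp.comp (continuous_const.mul Complex.continuous_ofReal)).aestronglyMeasurable)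
    (Filter.Eventually.of_forall fun k => ?_)
  have : ((β * (k : ℂ)).re) = β.re * k := by simp [Complex.mul_re]
  simp [Complex.norm_exp, this]

private lemma integral_cexp_Iic {β : ℂ} (hβ : 0 < β.re) (y : ℝ) :
    ∫ k in Set.Iic y, Complex.exp (β * k) = Complex.exp (β * y) / β := by
  have hβ0 : β ≠ 0 := fun h => by simp [h] at hβ
  have hderiv : ∀ x ∈ Set.Iic y,
      HasDerivAt (fun x : ℝ => Complex.exp (β * x) / β) (Complex.exp (β * x)) x := by
    intro x _
    have h1 : HasDerivAt (fun x : ℝ => β * (x : ℂ)) β x := by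
      simpa using (Complex.ofRealCLM.hasDerivAt (x := x)).const_mul β
    have h2 := (h1.cexp).div_const β
    simpa [mul_div_assoc, div_self hβ0] using h2
  have htend : Filter.Tendsto (fun x : ℝ => Complex.exp (β * x) / β)
      Filter.atBot (nhds 0) := by
    rw [tendsto_zero_iff_norm_tendsto_zero]
    have heq : (fun x : ℝ => ‖Complex.exp (β * x) / β‖)
        = fun x : ℝ => Real.exp (β.re * x) / ‖β‖ := by
      funext x
      have : ((β * (x : ℂ)).re) = β.re * x := by simp [Complex.mul_re]
      simp [Complex.norm_exp, this]
    rw [heq]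
    have h3 : Filter.Tendsto (fun x : ℝ => β.re * x) Filter.atBot Filter.atBot :=
      Filter.Tendsto.const_mul_atBot hβ Filter.tendsto_id
    simpa using (Real.tendsto_exp_atBot.comp h3).div_const ‖β‖
  rw [integral_Iic_of_hasDerivAt_of_tendsto' hderiv (cexp_integrableOn_Iic hβ y) htend,
    sub_zero]

private lemma slice_integrable {β : ℂ} (hβ : 0 < β.re) (y : ℝ) :
    Integrable (fun k : ℝ => Complex.exp (β * k)
      * (((max (Real.exp y - Real.exp k) 0) ^ 2 : ℝ) : ℂ)) := by
  have hzero : ∀ k : ℝ, k ∉ Set.Iic y → Complex.exp (β * k)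
      * (((max (Real.exp y - Real.exp k) 0) ^ 2 : ℝ) : ℂ) = 0 := by
    intro k hk
    have hky : y ≤ k := le_of_lt (by simpa using hk)
    have : max (Real.exp y - Real.exp k) 0 = 0 :=
      max_eq_right (by have := Real.exp_le_exp.2 hky; linarith)
    simp [this]
  have hind : (fun k : ℝ => Complex.exp (β * k)
      * (((max (Real.exp y - Real.exp k) 0) ^ 2 : ℝ) : ℂ))
      = Set.indicator (Set.Iic y) (fun k : ℝ => Complex.exp (β * k)
      * (((max (Real.exp y - Real.exp k) 0) ^ 2 : ℝ) : ℂ)) := by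
    funext k
    by_cases h : k ∈ Set.Iic y
    · rw [Set.indicator_of_mem h]
    · rw [Set.indicator_of_notMem h, hzero k h]
  rw [hind, integrable_indicator_iff measurableSet_Iic]
  refine ((exp_mul_integrableOn_Iic hβ y).const_mul ((Real.exp y) ^ 2)).mono'
    (Continuous.aestronglyMeasurable
      ((Complex.continuous_exp.comp (continuous_const.mul Complex.continuous_ofReal)).mul
        (Complex.continuous_ofReal.comp
          (((continuous_const.sub Real.continuous_exp).max continuous_const).pow 2))))
    (Filter.Eventually.of_forall fun k => ?_)
  have h1 : ((β * (k : ℂ)).re) = β.re * k := by simp [Complex.mul_re]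
  have h2 : (0:ℝ) ≤ (max (Real.exp y - Real.exp k) 0) ^ 2 := sq_nonneg _
  have h3 : max (Real.exp y - Real.exp k) 0 ≤ Real.exp y := by
    apply max_le _ (Real.exp_pos y).le
    have := (Real.exp_pos k).le; linarith
  have h4 : (max (Real.exp y - Real.exp k) 0) ^ 2 ≤ (Real.exp y) ^ 2 :=
    pow_le_pow_left₀ (le_max_right _ _) h3 2
  calc ‖Complex.exp (β * k) * (((max (Real.exp y - Real.exp k) 0) ^ 2 : ℝ) : ℂ)‖
      = Real.exp (β.re * k) * ((max (Real.exp y - Real.exp k) 0) ^ 2) := by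
        simp [Complex.norm_exp, h1, _root_.abs_of_nonneg h2]
    _ ≤ Real.exp (β.re * k) * (Real.exp y) ^ 2 :=
        mul_le_mul_of_nonneg_left h4 (Real.exp_pos _).le
    _ = (Real.exp y) ^ 2 * Real.exp (β.re * k) := by ring

private lemma slice_integral {β : ℂ} (hβ : 0 < β.re) (y : ℝ) :
    ∫ k : ℝ, Complex.exp (β * k) * (((max (Real.exp y - Real.exp k) 0) ^ 2 : ℝ) : ℂ)
      = Complex.exp ((β + 2) * y) * (1 / β - 2 / (β + 1) + 1 / (β + 2)) := by
  have hβ1 : 0 < (β + 1).re := by simp; linarith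
  have hβ2 : 0 < (β + 2).re := by simp; linarith
  have hzero : ∀ k : ℝ, k ∉ Set.Iic y → Complex.exp (β * k)
      * (((max (Real.exp y - Real.exp k) 0) ^ 2 : ℝ) : ℂ) = 0 := by
    intro k hk
    have hky : y ≤ k := le_of_lt (by simpa using hk)
    have : max (Real.exp y - Real.exp k) 0 = 0 :=
      max_eq_right (by have := Real.exp_le_exp.2 hky; linarith)
    simp [this]
  rw [← setIntegral_eq_integral_of_forall_compl_eq_zero hzero]
  have hcongr : ∀ k ∈ Set.Iic y, Complex.exp (β * k)
      * (((max (Real.exp y - Real.exp k) 0) ^ 2 : ℝ) : ℂ)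
      = ((Real.exp y : ℂ)) ^ 2 * Complex.exp (β * k)
        - 2 * (Real.exp y : ℂ) * Complex.exp ((β + 1) * k)
        + Complex.exp ((β + 2) * k) := by
    intro k hk
    have hky : k ≤ y := hk
    have hmax : max (Real.exp y - Real.exp k) 0 = Real.exp y - Real.exp k :=
      max_eq_left (by have := Real.exp_le_exp.2 hky; linarith)
    rw [hmax, show ((β + 1) * (k:ℂ)) = β * k + k by ring,
      show ((β + 2) * (k:ℂ)) = β * k + (k + k) by ring,
      Complex.exp_add, Complex.exp_add, Complex.exp_add]
    push_cast [Complex.ofReal_exp]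
    ring
  rw [setIntegral_congr_fun measurableSet_Iic hcongr]
  have i1 := (cexp_integrableOn_Iic hβ y).const_mul (((Real.exp y : ℂ)) ^ 2)
  have i2 := (cexp_integrableOn_Iic hβ1 y).const_mul (2 * (Real.exp y : ℂ))
  have i3 := cexp_integrableOn_Iic hβ2 y
  have i12 : Integrable (fun x : ℝ => ((Real.exp y : ℂ)) ^ 2 * Complex.exp (β * x)
      - 2 * (Real.exp y : ℂ) * Complex.exp ((β + 1) * x)) (volume.restrict (Set.Iic y)) :=
    i1.sub i2
  rw [integral_add i12 i3, integral_sub i1 i2, integral_const_mul,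
    integral_const_mul, integral_cexp_Iic hβ, integral_cexp_Iic hβ1, integral_cexp_Iic hβ2]
  rw [show ((β + 2) * (y:ℂ)) = β * y + (y + y) by ring,
    show ((β + 1) * (y:ℂ)) = β * y + y by ring,
    Complex.exp_add, Complex.exp_add, Complex.exp_add]
  push_cast [Complex.ofReal_exp]
  ring

private lemma slice_integral_real {α : ℝ} (hα : 0 < α) (y : ℝ) :
    ∫ k : ℝ, Real.exp (α * k) * (max (Real.exp y - Real.exp k) 0) ^ 2
      = Real.exp ((α + 2) * y) * (1 / α - 2 / (α + 1) + 1 / (α + 2)) := by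
  have h := slice_integral (β := (α : ℂ)) (by simpa using hα) y
  have hl : (∫ k : ℝ, Complex.exp ((α : ℂ) * k)
      * (((max (Real.exp y - Real.exp k) 0) ^ 2 : ℝ) : ℂ))
      = ((∫ k : ℝ, Real.exp (α * k) * (max (Real.exp y - Real.exp k) 0) ^ 2 : ℝ) : ℂ) := by
    rw [integral_coe]
    congr 1
    funext k
    push_cast [Complex.ofReal_exp]
    ring
  rw [hl] at h
  have hr : (Complex.exp (((α : ℂ) + 2) * y) * (1 / (α:ℂ) - 2 / ((α:ℂ) + 1) + 1 / ((α:ℂ) + 2)))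
      = ((Real.exp ((α + 2) * y) * (1 / α - 2 / (α + 1) + 1 / (α + 2)) : ℝ) : ℂ) := by
    push_cast [Complex.ofReal_exp]
    ring
  rw [hr] at h
  exact_mod_cast h

/-- Let `Y` satisfy `E[e^{(2+α)Y}] < ∞` for some `α > 0` and let
`c(k) = e^{αk} E[((e^Y - e^k)⁺)²]`. Then for all `v ∈ ℝ`,
`∫ e^{ivk} c(k) dk = ψ(v - (α+2)i) (1/(α+iv) - 2/(α+1+iv) + 1/(α+2+iv))`,
where `ψ(v - (α+2)i) = E[e^{(α+2)Y + ivY}]`. -/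
theorem stmt_12 {Ω : Type*} [MeasureSpace Ω] [IsProbabilityMeasure (ℙ : Measure Ω)]
    (Y : Ω → ℝ) (hY : Measurable Y)
    (α : ℝ) (hα : 0 < α)
    (hint : Integrable (fun ω => Real.exp ((2 + α) * Y ω)) ℙ) :
    ∀ v : ℝ,
      (∫ k : ℝ, Complex.exp (Complex.I * v * k)
          * ((Real.exp (α * k)
              * ∫ ω, (max (Real.exp (Y ω) - Real.exp k) 0) ^ 2 ∂ℙ : ℝ) : ℂ))
        = (∫ ω, Complex.exp (((α : ℂ) + 2) * (Y ω : ℂ) + Complex.I * v * (Y ω : ℂ)) ∂ℙ)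
          * (1 / ((α : ℂ) + Complex.I * v) - 2 / ((α : ℂ) + 1 + Complex.I * v)
              + 1 / ((α : ℂ) + 2 + Complex.I * v)) := by
  intro v
  set β : ℂ := (α : ℂ) + Complex.I * v with hβdef
  have hβre : β.re = α := by simp [hβdef]
  have hβpos : 0 < β.re := by rw [hβre]; exact hα
  -- the function under the double integral
  set F : ℝ → Ω → ℂ := fun k ω => Complex.exp (β * k)
    * (((max (Real.exp (Y ω) - Real.exp k) 0) ^ 2 : ℝ) : ℂ) with hFdef
  have hL : ∀ k : ℝ, Complex.exp (Complex.I * v * k)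
      * ((Real.exp (α * k)
          * ∫ ω, (max (Real.exp (Y ω) - Real.exp k) 0) ^ 2 ∂ℙ : ℝ) : ℂ)
      = ∫ ω, F k ω ∂ℙ := by
    intro k
    have hmul : Complex.exp (Complex.I * v * k) * ((Real.exp (α * k) : ℝ) : ℂ)
        = Complex.exp (β * k) := by
      rw [Complex.ofReal_exp, ← Complex.exp_add]
      congr 1
      push_cast
      ring
    rw [Complex.ofReal_mul, integral_coe, ← mul_assoc, hmul, ← integral_const_mul]
  simp_rw [hL]
  -- measurability of the uncurried function
  have hmeas : AEStronglyMeasurable (fun z : ℝ × Ω => F z.1 z.2) (volume.prod ℙ) := by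
    apply Measurable.aestronglyMeasurable
    apply Measurable.mul
    · exact Complex.measurable_exp.comp
        (measurable_const.mul (Complex.measurable_ofReal.comp measurable_fst))
    · exact Complex.measurable_ofReal.comp
        ((((Real.measurable_exp.comp (hY.comp measurable_snd)).sub
          (Real.measurable_exp.comp measurable_fst)).max measurable_const).pow_const 2)
  -- integrability on the product space
  have hint' : Integrable (fun ω => Real.exp ((α + 2) * Y ω)) ℙ := by
    simpa [add_comm] using hint
  have hnorm : ∀ (ω : Ω) (k : ℝ), ‖F k ω‖
      = Real.exp (α * k) * (max (Real.exp (Y ω) - Real.exp k) 0) ^ 2 := by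
    intro ω k
    have h1 : ((β * (k : ℂ)).re) = α * k := by rw [show (β * (k:ℂ)).re = β.re * k by
      simp [Complex.mul_re], hβre]
    have h2 : (0:ℝ) ≤ (max (Real.exp (Y ω) - Real.exp k) 0) ^ 2 := sq_nonneg _
    simp [hFdef, Complex.norm_exp, h1, _root_.abs_of_nonneg h2]
  have hprod : Integrable (Function.uncurry F) (volume.prod ℙ) := by
    rw [Function.uncurry_def]
    refine (integrable_prod_iff' hmeas).2 ⟨Filter.Eventually.of_forall fun ω => ?_, ?_⟩
    · exact slice_integrable hβpos (Y ω)
    · have heq : (fun ω => ∫ k : ℝ, ‖F k ω‖)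
          = fun ω => Real.exp ((α + 2) * Y ω) * (1 / α - 2 / (α + 1) + 1 / (α + 2)) := by
        funext ω
        simp_rw [hnorm ω]
        exact slice_integral_real hα (Y ω)
      rw [heq]
      exact hint'.mul_const (1 / α - 2 / (α + 1) + 1 / (α + 2))
  rw [MeasureTheory.integral_integral_swap hprod]
  have hinner : ∀ ω : Ω, (∫ k : ℝ, F k ω)
      = Complex.exp ((β + 2) * (Y ω : ℂ)) * (1 / β - 2 / (β + 1) + 1 / (β + 2)) :=
    fun ω => slice_integral hβpos (Y ω)
  simp_rw [hinner]
  rw [integral_mul_const]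
  congr 1
  · congr 1
    funext ω
    congr 1
    rw [hβdef]
    push_cast
    ring
  · rw [hβdef]; ring
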